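/- Let v be a linear classifier on [0,1]^n with weights w and threshold q, and suppose w_i > w_j > 0. If x ∈ Piv_j(b) \ Piv_i(b) for some b ∈ [0,1] and f_ij(x) ∉ Piv_i(b), then g_ij(x, b) ∈ Piv_i(x_i) \ (Piv_j(x_i) ∪ APiv_j(x_i)). -/
import Mathlib


open MeasureTheory

/-- The linear classifier on ℝ^n with weights w and threshold q. -/
noncomputable def linClass {n : ℕ} (w : Fin n → ℝ) (q : ℝ) (x : Fin n → ℝ) : ℝ :=
  if q ≤ ∑ k, w k * x k then 1 else 0

/-- The unit cube [0,1]^n. -/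
def unitCube (n : ℕ) : Set (Fin n → ℝ) := Set.univ.pi fun _ => Set.Icc 0 1

/-- Piv_i(b): points of the cube that are losing but become winning when
coordinate i is set to b. -/
noncomputable def pivSet {n : ℕ} (w : Fin n → ℝ) (q : ℝ) (i : Fin n) (b : ℝ) :
    Set (Fin n → ℝ) :=
  {x | x ∈ unitCube n ∧ linClass w q x = 0 ∧
    linClass w q (Function.update x i b) = 1}

/-- APiv_i(b): points of the cube that are winning but become losing when
coordinate i is set to b. -/
noncomputable def apivSet {n : ℕ} (w : Fin n → ℝ) (q : ℝ) (i : Fin n) (b : ℝ) :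
    Set (Fin n → ℝ) :=
  {x | x ∈ unitCube n ∧ linClass w q x = 1 ∧
    linClass w q (Function.update x i b) = 0}

/-- The map f_ij swapping coordinates i and j. -/
def swapCoords {n : ℕ} (i j : Fin n) (x : Fin n → ℝ) : Fin n → ℝ :=
  x ∘ Equiv.swap i j

/-- g_ij(x, b): x with coordinate i set to x_j and coordinate j set to b. -/
def gMap {n : ℕ} (i j : Fin n) (x : Fin n → ℝ) (b : ℝ) : Fin n → ℝ :=
  Function.update (Function.update x i (x j)) j b

lemma sum_update_eq {n : ℕ} (w x : Fin n → ℝ) (i : Fin n) (b : ℝ) :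
    ∑ k, w k * Function.update x i b k = (∑ k, w k * x k) + w i * (b - x i) := by
  have h1 : ∀ k, w k * Function.update x i b k =
      Function.update (fun k => w k * x k) i (w i * b) k := by
    intro k
    rcases eq_or_ne k i with rfl | h
    · simp
    · simp [Function.update_of_ne h]
  rw [Finset.sum_congr rfl (fun k _ => h1 k),
    Finset.sum_update_of_mem (Finset.mem_univ i),
    Finset.sum_eq_sum_sdiff_singleton_add (Finset.mem_univ i) (fun k => w k * x k)]
  ring

lemma linClass_eq_zero_iff {n : ℕ} (w : Fin n → ℝ) (q : ℝ) (x : Fin n → ℝ) :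
    linClass w q x = 0 ↔ ¬ q ≤ ∑ k, w k * x k := by
  unfold linClass; split <;> simp_all

lemma linClass_eq_one_iff {n : ℕ} (w : Fin n → ℝ) (q : ℝ) (x : Fin n → ℝ) :
    linClass w q x = 1 ↔ q ≤ ∑ k, w k * x k := by
  unfold linClass; split <;> simp_all

/-- If w_i > w_j > 0, x ∈ Piv_j(b) \ Piv_i(b) and
f_ij(x) ∉ Piv_i(b), then g_ij(x,b) ∈ Piv_i(x_i) \ (Piv_j(x_i) ∪ APiv_j(x_i)). -/
theorem gMap_mem_piv_diff
    {n : ℕ} (hn : 1 ≤ n) (w : Fin n → ℝ) (q : ℝ) (hw : ∀ k, w k ≠ 0)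
    (i j : Fin n) (hij : w j < w i) (hj : 0 < w j)
    (b : ℝ) (hb : b ∈ Set.Icc (0 : ℝ) 1)
    (x : Fin n → ℝ) (hx : x ∈ pivSet w q j b) (hx' : x ∉ pivSet w q i b)
    (hf : swapCoords i j x ∉ pivSet w q i b) :
    gMap i j x b ∈
      pivSet w q i (x i) \ (pivSet w q j (x i) ∪ apivSet w q j (x i)) := by

  have hne : i ≠ j := fun h => absurd hij (by rw [h]; exact lt_irrefl _)
  obtain ⟨hxc, hx0, hx1⟩ := hx
  -- basic inequalities
  have hSx : ∑ k, w k * x k < q := not_le.mp ((linClass_eq_zero_iff w q x).mp hx0)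
  have hPj : q ≤ (∑ k, w k * x k) + w j * (b - x j) := by
    have := (linClass_eq_one_iff w q _).mp hx1
    rwa [sum_update_eq] at this
  have hNi : (∑ k, w k * x k) + w i * (b - x i) < q := by
    have : ¬ linClass w q (Function.update x i b) = 1 := fun h => hx' ⟨hxc, hx0, h⟩
    have h2 := not_le.mp (fun h => this ((linClass_eq_one_iff w q _).mpr h))
    rwa [sum_update_eq] at h2
  -- b > x j and x i > x j
  have hbxj : x j < b := by nlinarith
  have hxij : x j < x i := by nlinarith [mul_lt_mul_of_pos_right hij (sub_pos.mpr hbxj)]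
  -- swapCoords as updates
  have hswap : swapCoords i j x = Function.update (Function.update x i (x j)) j (x i) := by
    funext k
    rcases eq_or_ne k i with rfl | hki
    · simp [swapCoords, Function.update_of_ne hne, Equiv.swap_apply_left]
    rcases eq_or_ne k j with rfl | hkj
    · simp [swapCoords, Equiv.swap_apply_right]
    · simp [swapCoords, Function.update_of_ne hkj, Function.update_of_ne hki,
        Equiv.swap_apply_of_ne_of_ne hki hkj]
  have hSswap : ∑ k, w k * swapCoords i j x k =
      (∑ k, w k * x k) + w i * (x j - x i) + w j * (x i - x j) := by
    rw [hswap, sum_update_eq, sum_update_eq, Function.update_of_ne (Ne.symm hne)]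
  have hswap0 : linClass w q (swapCoords i j x) = 0 := by
    rw [linClass_eq_zero_iff, hSswap, not_le]
    nlinarith [mul_pos (sub_pos.mpr hij) (sub_pos.mpr hxij)]
  have hswapc : swapCoords i j x ∈ unitCube n := by
    intro k _
    exact hxc (Equiv.swap i j k) (Set.mem_univ _)
  have hfkey : (∑ k, w k * x k) + w i * (x j - x i) + w j * (x i - x j)
      + w i * (b - x j) < q := by
    have h1 : ¬ linClass w q (Function.update (swapCoords i j x) i b) = 1 :=
      fun h => hf ⟨hswapc, hswap0, h⟩
    have h2 := not_le.mp (fun h => h1 ((linClass_eq_one_iff w q _).mpr h))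
    rw [sum_update_eq, hSswap] at h2
    have hsi : swapCoords i j x i = x j := by simp [swapCoords, Equiv.swap_apply_left]
    rw [hsi] at h2
    linarith
  -- sums involving g
  have hgj : gMap i j x b j = b := by simp [gMap]
  have hgi : gMap i j x b i = x j := by
    simp [gMap, Function.update_of_ne hne]
  have hSg : ∑ k, w k * gMap i j x b k =
      (∑ k, w k * x k) + w i * (x j - x i) + w j * (b - x j) := by
    unfold gMap
    rw [sum_update_eq, sum_update_eq, Function.update_of_ne (Ne.symm hne)]
  have hSgq : ∑ k, w k * gMap i j x b k < q := by
    rw [hSg]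
    nlinarith [mul_nonneg (sub_pos.mpr hij).le (sub_pos.mpr hbxj).le,
      mul_nonneg hj.le (sub_pos.mpr hxij).le]
  have hgc : gMap i j x b ∈ unitCube n := by
    intro k _
    rcases eq_or_ne k j with rfl | hkj
    · rw [hgj]; exact hb
    rcases eq_or_ne k i with rfl | hki
    · rw [hgi]; exact hxc j (Set.mem_univ _)
    · have : gMap i j x b k = x k := by
        simp [gMap, Function.update_of_ne hkj, Function.update_of_ne hki]
      rw [this]; exact hxc k (Set.mem_univ _)
  have hg0 : linClass w q (gMap i j x b) = 0 :=
    (linClass_eq_zero_iff w q _).mpr (not_le.mpr hSgq)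
  constructor
  · refine ⟨hgc, hg0, ?_⟩
    rw [linClass_eq_one_iff, sum_update_eq, hSg, hgi]
    linarith
  · rintro (⟨_, _, h1⟩ | ⟨_, h1, _⟩)
    · rw [linClass_eq_one_iff, sum_update_eq, hSg, hgj] at h1
      nlinarith [mul_nonneg (sub_pos.mpr hij).le (sub_pos.mpr hxij).le]
    · rw [hg0] at h1; norm_num at h1
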